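/- Define x̂(θ,c,v) = c + t₀v - (v / ⟨∇ₓf(x₀;θ₀), v₀⟩)·f(c + t₀v; θ). Then x̂(θ₀,c₀,v₀) = x₀, and the first derivatives of x̂ with respect to θ, c, and v at (θ₀,c₀,v₀) agree with those of the exact intersection point x(θ,c,v) = c + t(θ,c,v)·v. -/

import Mathlib

open scoped RealInnerProductSpace

noncomputable section
set_option maxHeartbeats 1000000

/-- Lemma 1 (sample network surrogate, point form): the surrogate
`x̂(θ,c,v) = c + t₀ v - (v / ⟨∇ₓf(x₀;θ₀), v₀⟩) f(c + t₀ v; θ)` agrees with the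
exact intersection point `x(θ,c,v) = c + t(θ,c,v) v` in value and in all first
partial derivatives at `(θ₀, c₀, v₀)`. -/
theorem sample_network_point {m : ℕ}
    (f : EuclideanSpace ℝ (Fin 3) → EuclideanSpace ℝ (Fin m) → ℝ)
    (t : EuclideanSpace ℝ (Fin m) → EuclideanSpace ℝ (Fin 3) → EuclideanSpace ℝ (Fin 3) → ℝ)
    (θ₀ : EuclideanSpace ℝ (Fin m)) (c₀ v₀ : EuclideanSpace ℝ (Fin 3))
    (hf : ContDiff ℝ 1 (fun p : EuclideanSpace ℝ (Fin 3) × EuclideanSpace ℝ (Fin m) => f p.1 p.2))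
    (ht : ∀ᶠ p : EuclideanSpace ℝ (Fin m) × EuclideanSpace ℝ (Fin 3) × EuclideanSpace ℝ (Fin 3)
        in nhds (θ₀, c₀, v₀), f (p.2.1 + t p.1 p.2.1 p.2.2 • p.2.2) p.1 = 0)
    (ht' : DifferentiableAt ℝ
      (fun p : EuclideanSpace ℝ (Fin m) × EuclideanSpace ℝ (Fin 3) × EuclideanSpace ℝ (Fin 3) =>
        t p.1 p.2.1 p.2.2) (θ₀, c₀, v₀))
    (t₀ : ℝ) (ht₀ : t₀ = t θ₀ c₀ v₀)
    (x₀ : EuclideanSpace ℝ (Fin 3)) (hx₀ : x₀ = c₀ + t₀ • v₀)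
    (g : EuclideanSpace ℝ (Fin 3)) (hgdef : g = gradient (fun x => f x θ₀) x₀)
    (hg : ⟪g, v₀⟫ ≠ 0)
    (xhat x : EuclideanSpace ℝ (Fin m) → EuclideanSpace ℝ (Fin 3) → EuclideanSpace ℝ (Fin 3) →
      EuclideanSpace ℝ (Fin 3))
    (hxhat : ∀ θ c v, xhat θ c v = c + t₀ • v - (f (c + t₀ • v) θ / ⟪g, v₀⟫) • v)
    (hx : ∀ θ c v, x θ c v = c + t θ c v • v) :
    xhat θ₀ c₀ v₀ = x₀ ∧
    fderiv ℝ (fun θ => xhat θ c₀ v₀) θ₀ = fderiv ℝ (fun θ => x θ c₀ v₀) θ₀ ∧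
    fderiv ℝ (fun c => xhat θ₀ c v₀) c₀ = fderiv ℝ (fun c => x θ₀ c v₀) c₀ ∧
    fderiv ℝ (fun v => xhat θ₀ c₀ v) v₀ = fderiv ℝ (fun v => x θ₀ c₀ v) v₀ := by
  have hx₀' : c₀ + t θ₀ c₀ v₀ • v₀ = x₀ := by rw [hx₀, ht₀]
  have f0 : f x₀ θ₀ = 0 := by
    have h := ht.self_of_nhds
    rw [hx₀, ht₀]; exact h
  set r : ℝ := ⟪g, v₀⟫ with hr
  -- the uncurried derivative of f
  set F : (EuclideanSpace ℝ (Fin 3)) × (EuclideanSpace ℝ (Fin m)) → ℝ := fun p => f p.1 p.2 with hFdef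
  set A := fderiv ℝ F (x₀, θ₀) with hA
  have hF : HasFDerivAt F A (x₀, θ₀) := ((hf.differentiable one_ne_zero) _).hasFDerivAt
  have hF' : HasFDerivAt F A (c₀ + t θ₀ c₀ v₀ • v₀, θ₀) := by rw [hx₀']; exact hF
  have hF'' : HasFDerivAt F A (c₀ + t₀ • v₀, θ₀) := by rw [← hx₀]; exact hF
  -- relation between the gradient g and A
  have hJx : HasFDerivAt (fun x : (EuclideanSpace ℝ (Fin 3)) => (x, θ₀))
      ((ContinuousLinearMap.id ℝ (EuclideanSpace ℝ (Fin 3))).prod 0) x₀ :=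
    (hasFDerivAt_id x₀).prodMk (hasFDerivAt_const θ₀ x₀)
  have hpart : HasFDerivAt (fun y : (EuclideanSpace ℝ (Fin 3)) => f y θ₀)
      (A.comp ((ContinuousLinearMap.id ℝ (EuclideanSpace ℝ (Fin 3))).prod 0)) x₀ := by have h0 := hF.comp (x := x₀) hJx; exact h0
  have hAv : ∀ w : (EuclideanSpace ℝ (Fin 3)), ⟪g, w⟫ = A (w, 0) := by
    intro w
    have h1 : ⟪g, w⟫ = fderiv ℝ (fun y : (EuclideanSpace ℝ (Fin 3)) => f y θ₀) x₀ w := by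
      rw [hgdef, gradient, InnerProductSpace.toDual_symm_apply]
    rw [h1, hpart.fderiv]
    simp
  -- splitting lemmas for A
  have hsplit : ∀ (u : (EuclideanSpace ℝ (Fin 3))) (w : (EuclideanSpace ℝ (Fin m))), A (u, w) = A (u, 0) + A (0, w) := by
    intro u w
    have : ((u, w) : (EuclideanSpace ℝ (Fin 3)) × (EuclideanSpace ℝ (Fin m))) = (u, 0) + (0, w) := by simp
    rw [this, map_add]
  have hsm : ∀ (a : ℝ) (u : (EuclideanSpace ℝ (Fin 3))), A (a • u, 0) = a * A (u, 0) := by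
    intro a u
    have : ((a • u, (0 : (EuclideanSpace ℝ (Fin m)))) : (EuclideanSpace ℝ (Fin 3)) × (EuclideanSpace ℝ (Fin m))) = a • (u, 0) := by simp
    rw [this, map_smul, smul_eq_mul]
  have hadd : ∀ (u1 u2 : (EuclideanSpace ℝ (Fin 3))), A (u1 + u2, 0) = A (u1, 0) + A (u2, 0) := by
    intro u1 u2
    have : ((u1 + u2, (0 : (EuclideanSpace ℝ (Fin m)))) : (EuclideanSpace ℝ (Fin 3)) × (EuclideanSpace ℝ (Fin m))) = (u1, 0) + (u2, 0) := by simp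
    rw [this, map_add]
  set T : (EuclideanSpace ℝ (Fin m)) × (EuclideanSpace ℝ (Fin 3)) × (EuclideanSpace ℝ (Fin 3)) → ℝ := fun p => t p.1 p.2.1 p.2.2 with hTdef
  set T' := fderiv ℝ T (θ₀, c₀, v₀) with hT'
  have hT : HasFDerivAt T T' (θ₀, c₀, v₀) := ht'.hasFDerivAt
  refine ⟨?_, ?_, ?_, ?_⟩
  · rw [hxhat, ← hx₀, f0]
    simp [hx₀]
  · -- θ derivative
    have hsθ : HasFDerivAt (fun θ : (EuclideanSpace ℝ (Fin m)) => ((θ, c₀, v₀) : (EuclideanSpace ℝ (Fin m)) × (EuclideanSpace ℝ (Fin 3)) × (EuclideanSpace ℝ (Fin 3))))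
        ((ContinuousLinearMap.id ℝ (EuclideanSpace ℝ (Fin m))).prod 0) θ₀ :=
      (hasFDerivAt_id θ₀).prodMk (hasFDerivAt_const (c₀, v₀) θ₀)
    have htθ : HasFDerivAt (fun θ : (EuclideanSpace ℝ (Fin m)) => t θ c₀ v₀)
        (T'.comp ((ContinuousLinearMap.id ℝ (EuclideanSpace ℝ (Fin m))).prod 0)) θ₀ := by have h0 := hT.comp (x := θ₀) hsθ; exact h0
    set Tθ := T'.comp ((ContinuousLinearMap.id ℝ (EuclideanSpace ℝ (Fin m))).prod 0) with hTθ
    have hmθ : HasFDerivAt (fun θ : (EuclideanSpace ℝ (Fin m)) => ((c₀ + t θ c₀ v₀ • v₀, θ) : (EuclideanSpace ℝ (Fin 3)) × (EuclideanSpace ℝ (Fin m))))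
        ((Tθ.smulRight v₀).prod (ContinuousLinearMap.id ℝ (EuclideanSpace ℝ (Fin m)))) θ₀ :=
      (((htθ.smul_const v₀).const_add c₀)).prodMk (hasFDerivAt_id θ₀)
    have hGθ : HasFDerivAt (fun θ : (EuclideanSpace ℝ (Fin m)) => f (c₀ + t θ c₀ v₀ • v₀) θ)
        (A.comp ((Tθ.smulRight v₀).prod (ContinuousLinearMap.id ℝ (EuclideanSpace ℝ (Fin m))))) θ₀ := by
      have h0 := HasFDerivAt.comp (f := fun θ : (EuclideanSpace ℝ (Fin m)) => ((c₀ + t θ c₀ v₀ • v₀, θ) : (EuclideanSpace ℝ (Fin 3)) × (EuclideanSpace ℝ (Fin m)))) (x := θ₀) hF' hmθ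
      exact h0
    have hzθ : (fun θ : (EuclideanSpace ℝ (Fin m)) => f (c₀ + t θ c₀ v₀ • v₀) θ) =ᶠ[nhds θ₀] fun _ => (0 : ℝ) := by
      have hcont : Filter.Tendsto (fun θ : (EuclideanSpace ℝ (Fin m)) => ((θ, c₀, v₀) : (EuclideanSpace ℝ (Fin m)) × (EuclideanSpace ℝ (Fin 3)) × (EuclideanSpace ℝ (Fin 3))))
          (nhds θ₀) (nhds (θ₀, c₀, v₀)) :=
        Continuous.tendsto (continuous_id.prodMk continuous_const) θ₀
      exact hcont.eventually ht
    have hcompθ : ∀ w : (EuclideanSpace ℝ (Fin m)), Tθ w * A (v₀, 0) + A (0, w) = 0 := by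
      intro w
      have h1 : fderiv ℝ (fun θ : (EuclideanSpace ℝ (Fin m)) => f (c₀ + t θ c₀ v₀ • v₀) θ) θ₀ = 0 := by
        rw [hzθ.fderiv_eq]; exact fderiv_const_apply 0
      have h2 := hGθ.fderiv
      rw [h1] at h2
      have h3 := congrArg (fun (L : (EuclideanSpace ℝ (Fin m)) →L[ℝ] ℝ) => L w) h2.symm
      simp only [ContinuousLinearMap.comp_apply, ContinuousLinearMap.prod_apply,
        ContinuousLinearMap.smulRight_apply, ContinuousLinearMap.id_apply,
        ContinuousLinearMap.zero_apply] at h3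
      rw [hsplit, hsm] at h3
      exact h3
    -- f-part derivative on the θ slice
    have hsfθ : HasFDerivAt (fun θ : (EuclideanSpace ℝ (Fin m)) => f x₀ θ)
        (A.comp ((0 : (EuclideanSpace ℝ (Fin m)) →L[ℝ] (EuclideanSpace ℝ (Fin 3))).prod (ContinuousLinearMap.id ℝ (EuclideanSpace ℝ (Fin m))))) θ₀ :=
      hF.comp (x := θ₀) ((hasFDerivAt_const x₀ θ₀).prodMk (hasFDerivAt_id θ₀))
    have hxhatθ : HasFDerivAt (fun θ : (EuclideanSpace ℝ (Fin m)) => xhat θ c₀ v₀)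
        (-((((r⁻¹ : ℝ) • (A.comp ((0 : (EuclideanSpace ℝ (Fin m)) →L[ℝ] (EuclideanSpace ℝ (Fin 3))).prod
          (ContinuousLinearMap.id ℝ (EuclideanSpace ℝ (Fin m)))))).smulRight v₀))) θ₀ := by
      have heq : (fun θ : (EuclideanSpace ℝ (Fin m)) => xhat θ c₀ v₀)
          = fun θ : (EuclideanSpace ℝ (Fin m)) => x₀ - (r⁻¹ * f x₀ θ) • v₀ := by
        funext θ
        rw [hxhat, ← hx₀, div_eq_inv_mul]
      rw [heq]
      exact ((hsfθ.const_mul r⁻¹).smul_const v₀).const_sub x₀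
    have hxθ : HasFDerivAt (fun θ : (EuclideanSpace ℝ (Fin m)) => x θ c₀ v₀) (Tθ.smulRight v₀) θ₀ := by
      have heq : (fun θ : (EuclideanSpace ℝ (Fin m)) => x θ c₀ v₀) = fun θ : (EuclideanSpace ℝ (Fin m)) => c₀ + t θ c₀ v₀ • v₀ := by
        funext θ; rw [hx]
      rw [heq]
      exact (htθ.smul_const v₀).const_add c₀
    rw [hxhatθ.fderiv, hxθ.fderiv]
    ext w i
    have hrv : A (v₀, 0) = r := (hAv v₀).symm
    have hc := hcompθ w
    rw [hrv] at hc
    have hTw : Tθ w = -(r⁻¹ * A (0, w)) := by field_simp; linarith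
    simp only [ContinuousLinearMap.neg_apply, ContinuousLinearMap.smulRight_apply,
      ContinuousLinearMap.smul_apply, ContinuousLinearMap.comp_apply,
      ContinuousLinearMap.prod_apply, ContinuousLinearMap.zero_apply,
      ContinuousLinearMap.id_apply, smul_eq_mul, hTw, neg_smul]
  · -- c derivative
    have hsc : HasFDerivAt (fun c : (EuclideanSpace ℝ (Fin 3)) => ((θ₀, c, v₀) : (EuclideanSpace ℝ (Fin m)) × (EuclideanSpace ℝ (Fin 3)) × (EuclideanSpace ℝ (Fin 3))))
        ((0 : (EuclideanSpace ℝ (Fin 3)) →L[ℝ] (EuclideanSpace ℝ (Fin m))).prod ((ContinuousLinearMap.id ℝ (EuclideanSpace ℝ (Fin 3))).prod 0)) c₀ :=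
      (hasFDerivAt_const θ₀ c₀).prodMk ((hasFDerivAt_id c₀).prodMk (hasFDerivAt_const v₀ c₀))
    have htc : HasFDerivAt (fun c : (EuclideanSpace ℝ (Fin 3)) => t θ₀ c v₀)
        (T'.comp ((0 : (EuclideanSpace ℝ (Fin 3)) →L[ℝ] (EuclideanSpace ℝ (Fin m))).prod ((ContinuousLinearMap.id ℝ (EuclideanSpace ℝ (Fin 3))).prod 0))) c₀ :=
      by have h0 := hT.comp (x := c₀) hsc; exact h0
    set Tc := T'.comp ((0 : (EuclideanSpace ℝ (Fin 3)) →L[ℝ] (EuclideanSpace ℝ (Fin m))).prod ((ContinuousLinearMap.id ℝ (EuclideanSpace ℝ (Fin 3))).prod 0)) with hTc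
    have hmc : HasFDerivAt (fun c : (EuclideanSpace ℝ (Fin 3)) => ((c + t θ₀ c v₀ • v₀, θ₀) : (EuclideanSpace ℝ (Fin 3)) × (EuclideanSpace ℝ (Fin m))))
        (((ContinuousLinearMap.id ℝ (EuclideanSpace ℝ (Fin 3)) + Tc.smulRight v₀)).prod 0) c₀ :=
      ((hasFDerivAt_id c₀).add (htc.smul_const v₀)).prodMk (hasFDerivAt_const θ₀ c₀)
    have hGc : HasFDerivAt (fun c : (EuclideanSpace ℝ (Fin 3)) => f (c + t θ₀ c v₀ • v₀) θ₀)
        (A.comp (((ContinuousLinearMap.id ℝ (EuclideanSpace ℝ (Fin 3)) + Tc.smulRight v₀)).prod 0)) c₀ := by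
      have h0 := HasFDerivAt.comp (f := fun c : (EuclideanSpace ℝ (Fin 3)) => ((c + t θ₀ c v₀ • v₀, θ₀) : (EuclideanSpace ℝ (Fin 3)) × (EuclideanSpace ℝ (Fin m)))) (x := c₀) hF' hmc
      exact h0
    have hzc : (fun c : (EuclideanSpace ℝ (Fin 3)) => f (c + t θ₀ c v₀ • v₀) θ₀) =ᶠ[nhds c₀] fun _ => (0 : ℝ) := by
      have hcont : Filter.Tendsto (fun c : (EuclideanSpace ℝ (Fin 3)) => ((θ₀, c, v₀) : (EuclideanSpace ℝ (Fin m)) × (EuclideanSpace ℝ (Fin 3)) × (EuclideanSpace ℝ (Fin 3))))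
          (nhds c₀) (nhds (θ₀, c₀, v₀)) :=
        Continuous.tendsto (continuous_const.prodMk (continuous_id.prodMk continuous_const)) c₀
      exact hcont.eventually ht
    have hcompc : ∀ w : (EuclideanSpace ℝ (Fin 3)), A (w, 0) + Tc w * A (v₀, 0) = 0 := by
      intro w
      have h1 : fderiv ℝ (fun c : (EuclideanSpace ℝ (Fin 3)) => f (c + t θ₀ c v₀ • v₀) θ₀) c₀ = 0 := by
        rw [hzc.fderiv_eq]; exact fderiv_const_apply 0
      have h2 := hGc.fderiv
      rw [h1] at h2
      have h3 := congrArg (fun (L : (EuclideanSpace ℝ (Fin 3)) →L[ℝ] ℝ) => L w) h2.symm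
      simp only [ContinuousLinearMap.comp_apply, ContinuousLinearMap.prod_apply,
        ContinuousLinearMap.smulRight_apply, ContinuousLinearMap.id_apply,
        ContinuousLinearMap.zero_apply, ContinuousLinearMap.add_apply] at h3
      rw [hadd, hsm] at h3
      exact h3
    -- f-part derivative on the c slice
    have hsfc : HasFDerivAt (fun c : (EuclideanSpace ℝ (Fin 3)) => f (c + t₀ • v₀) θ₀)
        (A.comp ((ContinuousLinearMap.id ℝ (EuclideanSpace ℝ (Fin 3))).prod 0)) c₀ :=
      by have h0 := HasFDerivAt.comp (f := fun c : (EuclideanSpace ℝ (Fin 3)) => ((c + t₀ • v₀, θ₀) : (EuclideanSpace ℝ (Fin 3)) × (EuclideanSpace ℝ (Fin m)))) (x := c₀) hF'' (((hasFDerivAt_id c₀).add_const (t₀ • v₀)).prodMk (hasFDerivAt_const θ₀ c₀)); exact h0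
    have hxhatc : HasFDerivAt (fun c : (EuclideanSpace ℝ (Fin 3)) => xhat θ₀ c v₀)
        ((ContinuousLinearMap.id ℝ (EuclideanSpace ℝ (Fin 3)))
          - ((r⁻¹ : ℝ) • (A.comp ((ContinuousLinearMap.id ℝ (EuclideanSpace ℝ (Fin 3))).prod 0))).smulRight v₀) c₀ := by
      have heq : (fun c : (EuclideanSpace ℝ (Fin 3)) => xhat θ₀ c v₀)
          = fun c : (EuclideanSpace ℝ (Fin 3)) => (c + t₀ • v₀) - (r⁻¹ * f (c + t₀ • v₀) θ₀) • v₀ := by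
        funext c
        rw [hxhat, div_eq_inv_mul]
      rw [heq]
      exact ((hasFDerivAt_id c₀).add_const (t₀ • v₀)).sub
        ((hsfc.const_mul r⁻¹).smul_const v₀)
    have hxc : HasFDerivAt (fun c : (EuclideanSpace ℝ (Fin 3)) => x θ₀ c v₀)
        (ContinuousLinearMap.id ℝ (EuclideanSpace ℝ (Fin 3)) + Tc.smulRight v₀) c₀ := by
      have heq : (fun c : (EuclideanSpace ℝ (Fin 3)) => x θ₀ c v₀) = fun c : (EuclideanSpace ℝ (Fin 3)) => c + t θ₀ c v₀ • v₀ := by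
        funext c; rw [hx]
      rw [heq]
      exact (hasFDerivAt_id c₀).add (htc.smul_const v₀)
    rw [hxhatc.fderiv, hxc.fderiv]
    ext w i
    have hrv : A (v₀, 0) = r := (hAv v₀).symm
    have hc := hcompc w
    rw [hrv] at hc
    have hTw : Tc w = -(r⁻¹ * A (w, 0)) := by field_simp; linarith
    simp only [ContinuousLinearMap.sub_apply, ContinuousLinearMap.add_apply,
      ContinuousLinearMap.smulRight_apply, ContinuousLinearMap.smul_apply,
      ContinuousLinearMap.comp_apply, ContinuousLinearMap.prod_apply,
      ContinuousLinearMap.zero_apply, ContinuousLinearMap.id_apply, smul_eq_mul,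
      hTw, neg_smul, sub_eq_add_neg, ContinuousLinearMap.neg_apply]
  · -- v derivative
    have hsv : HasFDerivAt (fun v : (EuclideanSpace ℝ (Fin 3)) => ((θ₀, c₀, v) : (EuclideanSpace ℝ (Fin m)) × (EuclideanSpace ℝ (Fin 3)) × (EuclideanSpace ℝ (Fin 3))))
        ((0 : (EuclideanSpace ℝ (Fin 3)) →L[ℝ] (EuclideanSpace ℝ (Fin m))).prod ((0 : (EuclideanSpace ℝ (Fin 3)) →L[ℝ] (EuclideanSpace ℝ (Fin 3))).prod (ContinuousLinearMap.id ℝ (EuclideanSpace ℝ (Fin 3))))) v₀ :=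
      (hasFDerivAt_const θ₀ v₀).prodMk ((hasFDerivAt_const c₀ v₀).prodMk (hasFDerivAt_id v₀))
    have htv : HasFDerivAt (fun v : (EuclideanSpace ℝ (Fin 3)) => t θ₀ c₀ v)
        (T'.comp ((0 : (EuclideanSpace ℝ (Fin 3)) →L[ℝ] (EuclideanSpace ℝ (Fin m))).prod
          ((0 : (EuclideanSpace ℝ (Fin 3)) →L[ℝ] (EuclideanSpace ℝ (Fin 3))).prod (ContinuousLinearMap.id ℝ (EuclideanSpace ℝ (Fin 3)))))) v₀ := by have h0 := hT.comp (x := v₀) hsv; exact h0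
    set Tv := T'.comp ((0 : (EuclideanSpace ℝ (Fin 3)) →L[ℝ] (EuclideanSpace ℝ (Fin m))).prod
      ((0 : (EuclideanSpace ℝ (Fin 3)) →L[ℝ] (EuclideanSpace ℝ (Fin 3))).prod (ContinuousLinearMap.id ℝ (EuclideanSpace ℝ (Fin 3))))) with hTvdef
    have hmv : HasFDerivAt (fun v : (EuclideanSpace ℝ (Fin 3)) => ((c₀ + t θ₀ c₀ v • v, θ₀) : (EuclideanSpace ℝ (Fin 3)) × (EuclideanSpace ℝ (Fin m))))
        ((t θ₀ c₀ v₀ • ContinuousLinearMap.id ℝ (EuclideanSpace ℝ (Fin 3)) + Tv.smulRight v₀).prod 0) v₀ :=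
      ((htv.smul (hasFDerivAt_id v₀)).const_add c₀).prodMk (hasFDerivAt_const θ₀ v₀)
    have hGv : HasFDerivAt (fun v : (EuclideanSpace ℝ (Fin 3)) => f (c₀ + t θ₀ c₀ v • v) θ₀)
        (A.comp ((t θ₀ c₀ v₀ • ContinuousLinearMap.id ℝ (EuclideanSpace ℝ (Fin 3)) + Tv.smulRight v₀).prod 0)) v₀ := by
      have h0 := HasFDerivAt.comp (f := fun v : (EuclideanSpace ℝ (Fin 3)) => ((c₀ + t θ₀ c₀ v • v, θ₀) : (EuclideanSpace ℝ (Fin 3)) × (EuclideanSpace ℝ (Fin m)))) (x := v₀) hF' hmv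
      exact h0
    have hzv : (fun v : (EuclideanSpace ℝ (Fin 3)) => f (c₀ + t θ₀ c₀ v • v) θ₀) =ᶠ[nhds v₀] fun _ => (0 : ℝ) := by
      have hcont : Filter.Tendsto (fun v : (EuclideanSpace ℝ (Fin 3)) => ((θ₀, c₀, v) : (EuclideanSpace ℝ (Fin m)) × (EuclideanSpace ℝ (Fin 3)) × (EuclideanSpace ℝ (Fin 3))))
          (nhds v₀) (nhds (θ₀, c₀, v₀)) :=
        Continuous.tendsto (continuous_const.prodMk (continuous_const.prodMk continuous_id)) v₀
      exact hcont.eventually ht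
    have hcompv : ∀ w : (EuclideanSpace ℝ (Fin 3)), t₀ * A (w, 0) + Tv w * A (v₀, 0) = 0 := by
      intro w
      have h1 : fderiv ℝ (fun v : (EuclideanSpace ℝ (Fin 3)) => f (c₀ + t θ₀ c₀ v • v) θ₀) v₀ = 0 := by
        rw [hzv.fderiv_eq]; exact fderiv_const_apply 0
      have h2 := hGv.fderiv
      rw [h1] at h2
      have h3 := congrArg (fun (L : (EuclideanSpace ℝ (Fin 3)) →L[ℝ] ℝ) => L w) h2.symm
      simp only [ContinuousLinearMap.comp_apply, ContinuousLinearMap.prod_apply,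
        ContinuousLinearMap.smulRight_apply, ContinuousLinearMap.id_apply,
        ContinuousLinearMap.zero_apply, ContinuousLinearMap.add_apply,
        ContinuousLinearMap.smul_apply] at h3
      rw [hadd, hsm, hsm, ← ht₀] at h3
      exact h3
    -- f-part derivative on the v slice
    have hsfv : HasFDerivAt (fun v : (EuclideanSpace ℝ (Fin 3)) => f (c₀ + t₀ • v) θ₀)
        (A.comp ((t₀ • ContinuousLinearMap.id ℝ (EuclideanSpace ℝ (Fin 3))).prod 0)) v₀ :=
      by have h0 := HasFDerivAt.comp (f := fun v : (EuclideanSpace ℝ (Fin 3)) => ((c₀ + t₀ • v, θ₀) : (EuclideanSpace ℝ (Fin 3)) × (EuclideanSpace ℝ (Fin m)))) (x := v₀) hF'' ((((hasFDerivAt_id v₀).const_smul t₀).const_add c₀).prodMk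
        (hasFDerivAt_const θ₀ v₀)); exact h0
    have hxhatv : HasFDerivAt (fun v : (EuclideanSpace ℝ (Fin 3)) => xhat θ₀ c₀ v)
        ((t₀ • ContinuousLinearMap.id ℝ (EuclideanSpace ℝ (Fin 3)))
          - ((r⁻¹ * f (c₀ + t₀ • v₀) θ₀) • ContinuousLinearMap.id ℝ (EuclideanSpace ℝ (Fin 3))
            + ((r⁻¹ : ℝ) • (A.comp ((t₀ • ContinuousLinearMap.id ℝ (EuclideanSpace ℝ (Fin 3))).prod 0))).smulRight v₀))
        v₀ := by
      have heq : (fun v : (EuclideanSpace ℝ (Fin 3)) => xhat θ₀ c₀ v)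
          = fun v : (EuclideanSpace ℝ (Fin 3)) => (c₀ + t₀ • v) - (r⁻¹ * f (c₀ + t₀ • v) θ₀) • v := by
        funext v
        rw [hxhat, div_eq_inv_mul]
      rw [heq]
      exact (((hasFDerivAt_id v₀).const_smul t₀).const_add c₀).sub
        ((hsfv.const_mul r⁻¹).smul (hasFDerivAt_id v₀))
    have hxv : HasFDerivAt (fun v : (EuclideanSpace ℝ (Fin 3)) => x θ₀ c₀ v)
        (t θ₀ c₀ v₀ • ContinuousLinearMap.id ℝ (EuclideanSpace ℝ (Fin 3)) + Tv.smulRight v₀) v₀ := by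
      have heq : (fun v : (EuclideanSpace ℝ (Fin 3)) => x θ₀ c₀ v) = fun v : (EuclideanSpace ℝ (Fin 3)) => c₀ + t θ₀ c₀ v • v := by
        funext v; rw [hx]
      rw [heq]
      exact ((htv.smul (hasFDerivAt_id v₀)).const_add c₀)
    rw [hxhatv.fderiv, hxv.fderiv]
    ext w i
    have hrv : A (v₀, 0) = r := (hAv v₀).symm
    have hc := hcompv w
    rw [hrv] at hc
    have hTw : Tv w = -(r⁻¹ * (t₀ * A (w, 0))) := by field_simp; linarith
    have hf0' : f (c₀ + t₀ • v₀) θ₀ = 0 := by rw [← hx₀]; exact f0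
    simp only [ContinuousLinearMap.sub_apply, ContinuousLinearMap.add_apply,
      ContinuousLinearMap.smulRight_apply, ContinuousLinearMap.smul_apply,
      ContinuousLinearMap.comp_apply, ContinuousLinearMap.prod_apply,
      ContinuousLinearMap.zero_apply, ContinuousLinearMap.id_apply, smul_eq_mul,
      hTw, hf0', ← ht₀, neg_smul, sub_eq_add_neg, mul_zero, zero_mul, zero_smul, add_zero,
      zero_add, neg_add, ContinuousLinearMap.neg_apply, mul_assoc, neg_zero, hsm]
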